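/- arXiv:1602.04317 — 6 statements merged into one kernel-verified Lean document; each statement's English description precedes it below -/
import Mathlib

section
/- For every positive integer S, the product ∏_{s=1}^{S} (2s+1)/(2s) satisfies √((2/π)(2S+1)) ≤ ∏_{s=1}^{S} (2s+1)/(2s) ≤ (2S+1)/√(Sπ). -/
open Real Finset

lemma wallis_prod_sq_mul_W (S : ℕ) :
    (∏ s ∈ Finset.Icc 1 S, ((2 * (s : ℝ) + 1) / (2 * s)))^2 * Real.Wallis.W S
      = 2 * S + 1 := by
  induction S with
  | zero => simp [Real.Wallis.W]
  | succ n ih =>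
    rw [Finset.prod_Icc_succ_top (by omega : 1 ≤ n + 1), Real.Wallis.W_succ]
    have h1 : (2 * ((n:ℝ)+1) : ℝ) ≠ 0 := by positivity
    have h2 : (2 * (n:ℝ) + 1 : ℝ) ≠ 0 := by positivity
    have h3 : (2 * (n:ℝ) + 3 : ℝ) ≠ 0 := by positivity
    have expand : ((2 * ((n:ℝ)+1) + 1) / (2 * ((n:ℝ)+1)))^2 *
        ((2 * (n:ℝ) + 2) / (2 * (n:ℝ) + 1) * ((2 * (n:ℝ) + 2) / (2 * (n:ℝ) + 3))) =
        (2 * ((n:ℝ)+1) + 1) / (2 * (n:ℝ) + 1) := by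
      field_simp
      ring
    push_cast
    rw [mul_pow]
    calc (∏ s ∈ Finset.Icc 1 n, ((2 * (s : ℝ) + 1) / (2 * s)))^2 *
          ((2 * ((n:ℝ)+1) + 1) / (2 * ((n:ℝ)+1)))^2 *
          (Real.Wallis.W n * ((2 * (n:ℝ) + 2) / (2 * (n:ℝ) + 1) * ((2 * (n:ℝ) + 2) / (2 * (n:ℝ) + 3))))
        = ((∏ s ∈ Finset.Icc 1 n, ((2 * (s : ℝ) + 1) / (2 * s)))^2 * Real.Wallis.W n) *
          (((2 * ((n:ℝ)+1) + 1) / (2 * ((n:ℝ)+1)))^2 *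
          ((2 * (n:ℝ) + 2) / (2 * (n:ℝ) + 1) * ((2 * (n:ℝ) + 2) / (2 * (n:ℝ) + 3)))) := by
          ring
      _ = (2 * (n:ℝ) + 1) * ((2 * ((n:ℝ)+1) + 1) / (2 * (n:ℝ) + 1)) := by rw [ih, expand]
      _ = 2 * ((n:ℝ)+1) + 1 := by field_simp

theorem wallis_type_estimates (S : ℕ) (hS : 1 ≤ S) :
    Real.sqrt ((2 / Real.pi) * (2 * S + 1)) ≤
      ∏ s ∈ Finset.Icc 1 S, ((2 * (s : ℝ) + 1) / (2 * s)) ∧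
    ∏ s ∈ Finset.Icc 1 S, ((2 * (s : ℝ) + 1) / (2 * s)) ≤
      (2 * S + 1) / Real.sqrt (S * Real.pi) := by
  set P : ℝ := ∏ s ∈ Finset.Icc 1 S, ((2 * (s : ℝ) + 1) / (2 * s)) with hP
  have hPpos : 0 < P := Finset.prod_pos (by
    intro s hs
    have : 1 ≤ s := (Finset.mem_Icc.mp hs).1
    have : (0:ℝ) < s := by exact_mod_cast this
    positivity)
  have hW := wallis_prod_sq_mul_W S
  rw [← hP] at hW
  have hWpos := Real.Wallis.W_pos S
  have hWle := Real.Wallis.W_le S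
  have hleW := Real.Wallis.le_W S
  have hS' : (1:ℝ) ≤ (S:ℝ) := by exact_mod_cast hS
  have hpi := Real.pi_pos
  constructor
  · have key : (2 / Real.pi) * (2 * S + 1) ≤ P^2 := by
      have h2 : (0:ℝ) < 2 * S + 1 := by positivity
      rw [div_mul_eq_mul_div, div_le_iff₀ hpi]
      nlinarith
    calc Real.sqrt ((2 / Real.pi) * (2 * S + 1)) ≤ Real.sqrt (P^2) :=
          Real.sqrt_le_sqrt key
      _ = P := Real.sqrt_sq hPpos.le
  · have hsq : (0:ℝ) < (S:ℝ) * Real.pi := by positivity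
    have key : P^2 * ((S:ℝ) * Real.pi) ≤ (2 * S + 1)^2 := by
      have h2 : (0:ℝ) < 2 * (S:ℝ) + 2 := by positivity
      rw [div_mul_eq_mul_div, div_le_iff₀ h2] at hleW
      have h1 : (S:ℝ) * Real.pi ≤ (2 * S + 1) * Real.Wallis.W S := by
        nlinarith
      nlinarith
    rw [le_div_iff₀ (Real.sqrt_pos.mpr hsq)]
    have hsqq : (P * Real.sqrt ((S:ℝ) * Real.pi))^2 ≤ (2 * (S:ℝ) + 1)^2 := by
      rw [mul_pow, Real.sq_sqrt hsq.le]; exact key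
    have hnn : (0:ℝ) ≤ 2 * (S:ℝ) + 1 := by positivity
    have := Real.sqrt_le_sqrt hsqq
    rwa [Real.sqrt_sq (by positivity), Real.sqrt_sq hnn] at this
end

section
/- Let f(x) = x/log x and let k ≥ e⁴ be real. Then for every integer j ≥ 1 and every real x in the interval [jk, (j + 1/2)k], we have f'(x) − f'(x + k/2) > (1/2) · log(1 + k/(2x)) / (log x · log(x + k/2)). -/
theorem deriv_difference_lower_bound (k : ℝ) (hk : Real.exp 4 ≤ k) (j : ℕ) (hj : 1 ≤ j)
    (x : ℝ) (hx₁ : (j : ℝ) * k ≤ x) (hx₂ : x ≤ ((j : ℝ) + 1 / 2) * k) :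
    (1 / Real.log x - 1 / (Real.log x) ^ 2) -
      (1 / Real.log (x + k / 2) - 1 / (Real.log (x + k / 2)) ^ 2) >
    (1 / 2) * Real.log (1 + k / (2 * x)) / (Real.log x * Real.log (x + k / 2)) := by
  have hk0 : (0:ℝ) < k := lt_of_lt_of_le (Real.exp_pos 4) hk
  have hj1 : (1:ℝ) ≤ (j:ℝ) := by exact_mod_cast hj
  have hkx : k ≤ x := le_trans (by nlinarith) hx₁
  have hx0 : (0:ℝ) < x := lt_of_lt_of_le hk0 hkx
  set a := Real.log x with ha'
  set b := Real.log (x + k / 2) with hb'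
  have ha : (4:ℝ) ≤ a := by
    have := Real.log_le_log (Real.exp_pos 4) (le_trans hk hkx)
    simpa [Real.log_exp] using this
  have hab : a < b := Real.log_lt_log hx0 (by linarith)
  have ha0 : (0:ℝ) < a := by linarith
  have hb0 : (0:ℝ) < b := by linarith
  have hlog : Real.log (1 + k / (2 * x)) = b - a := by
    have h1 : 1 + k / (2 * x) = (x + k / 2) / x := by field_simp
    rw [h1, Real.log_div (by linarith) (ne_of_gt hx0)]
  rw [hlog]
  have expand : (1 / a - 1 / a ^ 2) - (1 / b - 1 / b ^ 2)
      = (b - a) * (a * b - a - b) / (a ^ 2 * b ^ 2) := by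
    field_simp; ring
  rw [expand, gt_iff_lt, div_lt_div_iff₀ (by positivity) (by positivity), mul_assoc]
  have key : 0 < a * b - 2 * a - 2 * b := by nlinarith
  nlinarith [mul_pos (mul_pos ha0 hb0) (mul_pos (sub_pos.mpr hab) key)]
end

section
/- Let k ≥ e⁴ be real, let x_j = jk and x̄_j = (j + 1/2)k, and define E'_j(k) = 2 f(x̄_j) − f(x_j) − f(x_{j+1}) with f(x) = x/log x. Then for all natural numbers 1 ≤ a ≤ b, (8/k) · ∑_{j=a}^{b} E'_j(k) > log((4b+6)/(9a)) / log²((b+1)k). -/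
noncomputable def f (x : ℝ) : ℝ := x / Real.log x

lemma hasDerivAt_f_aux {x : ℝ} (hx : 1 < x) :
    HasDerivAt f ((Real.log x - 1) / (Real.log x) ^ 2) x := by
  have hx0 : x ≠ 0 := by linarith
  have hlx : Real.log x ≠ 0 := ne_of_gt (Real.log_pos hx)
  have h := (hasDerivAt_id x).div (Real.hasDerivAt_log hx0) hlx
  refine h.congr_deriv ?_
  field_simp
  simp only [id]
  ring

lemma hasDerivAt_f'_aux {x : ℝ} (hx : 1 < x) :
    HasDerivAt (fun y => (Real.log y - 1) / (Real.log y) ^ 2)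
      ((2 - Real.log x) / (x * (Real.log x) ^ 3)) x := by
  have hx0 : x ≠ 0 := by linarith
  have hlx : Real.log x ≠ 0 := ne_of_gt (Real.log_pos hx)
  have hnum : HasDerivAt (fun y => Real.log y - 1) x⁻¹ x :=
    (Real.hasDerivAt_log hx0).sub_const 1
  have hden : HasDerivAt (fun y => (Real.log y) ^ 2)
      ((2 : ℕ) * (Real.log x) ^ (2 - 1) * x⁻¹) x := (Real.hasDerivAt_log hx0).pow 2
  have h := hnum.div hden (pow_ne_zero 2 hlx)
  refine h.congr_deriv ?_
  field_simp
  ring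

/-- Key per-term lower bound. -/
lemma key_term (k : ℝ) (hk : Real.exp 4 ≤ k) (j : ℕ) (hj : 1 ≤ j) :
    k / (8 * ((j : ℝ) + 1) * (Real.log (((j : ℝ) + 1) * k)) ^ 2) ≤
      2 * f (((j : ℝ) + 1 / 2) * k) - f ((j : ℝ) * k) - f (((j : ℝ) + 1) * k) := by
  have he4 : (5 : ℝ) ≤ Real.exp 4 := by
    have := Real.add_one_le_exp (4 : ℝ); linarith
  have hk5 : (5 : ℝ) ≤ k := le_trans he4 hk
  have hk0 : (0 : ℝ) < k := by linarith
  have hlogk : (4 : ℝ) ≤ Real.log k := by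
    rw [← Real.log_exp 4]
    exact Real.log_le_log (Real.exp_pos 4) hk
  have hjr : (1 : ℝ) ≤ (j : ℝ) := by exact_mod_cast hj
  set X : ℝ := (j : ℝ) * k with hXdef
  set Y : ℝ := ((j : ℝ) + 1) * k with hYdef
  set m : ℝ := ((j : ℝ) + 1 / 2) * k with hmdef
  have hXk : k ≤ X := by rw [hXdef]; nlinarith
  have hXY : X < Y := by rw [hXdef, hYdef]; nlinarith
  have hX1 : (1 : ℝ) < X := by linarith
  have hmemlog : ∀ x ∈ Set.Icc X Y, (4 : ℝ) ≤ Real.log x := by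
    intro x hx
    have hx1 : k ≤ x := le_trans hXk hx.1
    calc (4 : ℝ) ≤ Real.log k := hlogk
      _ ≤ Real.log x := Real.log_le_log hk0 hx1
  have hLY : (4 : ℝ) ≤ Real.log Y :=
    hmemlog Y (Set.mem_Icc.2 ⟨le_of_lt hXY, le_refl _⟩)
  have hLY0 : (0 : ℝ) < Real.log Y := by linarith
  have hY0 : (0 : ℝ) < Y := by nlinarith
  set c : ℝ := 1 / (2 * Y * (Real.log Y) ^ 2) with hcdef
  set φ : ℝ → ℝ := fun x => f x + c / 2 * x ^ 2 with hφdef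
  have hconc : ConcaveOn ℝ (Set.Icc X Y) φ := by
    apply concaveOn_of_hasDerivWithinAt2_nonpos (f' := fun x =>
        (Real.log x - 1) / (Real.log x) ^ 2 + c * x)
      (f'' := fun x => (2 - Real.log x) / (x * (Real.log x) ^ 3) + c)
      (convex_Icc X Y)
    · intro x hx
      have hx1 : 1 < x := lt_of_lt_of_le hX1 hx.1
      have hx0 : x ≠ 0 := by linarith
      have hlx : Real.log x ≠ 0 := ne_of_gt (Real.log_pos hx1)
      exact (((continuousAt_id.div (Real.continuousAt_log hx0) hlx).add
        (continuousAt_const.mul ((continuous_pow 2).continuousAt)))).continuousWithinAt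
    · intro x hx
      rw [interior_Icc] at hx
      have hx1 : 1 < x := lt_trans hX1 hx.1
      have hd : HasDerivAt φ ((Real.log x - 1) / (Real.log x) ^ 2 + c * x) x := by
        have h1 := hasDerivAt_f_aux hx1
        have h2 := (hasDerivAt_pow 2 x).const_mul (c / 2)
        have h3 := h1.add h2
        refine h3.congr_deriv ?_
        push_cast
        ring
      exact hd.hasDerivWithinAt
    · intro x hx
      rw [interior_Icc] at hx
      have hx1 : 1 < x := lt_trans hX1 hx.1
      have hd : HasDerivAt (fun y => (Real.log y - 1) / (Real.log y) ^ 2 + c * y)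
          ((2 - Real.log x) / (x * (Real.log x) ^ 3) + c) x := by
        have h1 := hasDerivAt_f'_aux hx1
        have h2 := (hasDerivAt_id x).const_mul c
        have h3 := h1.add h2
        refine h3.congr_deriv ?_
        ring
      exact hd.hasDerivWithinAt
    · intro x hx
      rw [interior_Icc] at hx
      have hxmem : x ∈ Set.Icc X Y := ⟨le_of_lt hx.1, le_of_lt hx.2⟩
      have hLx : (4 : ℝ) ≤ Real.log x := hmemlog x hxmem
      have hx0 : (0 : ℝ) < x := lt_of_lt_of_le (by linarith : (0:ℝ) < X) hxmem.1
      have hLx0 : (0 : ℝ) < Real.log x := by linarith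
      have hxY : x ≤ Y := hxmem.2
      have hLxY : Real.log x ≤ Real.log Y := Real.log_le_log hx0 hxY
      have h1 : c ≤ 1 / (2 * x * (Real.log x) ^ 2) := by
        rw [hcdef]
        apply one_div_le_one_div_of_le
        · positivity
        · have : x * (Real.log x) ^ 2 ≤ Y * (Real.log Y) ^ 2 := by
            apply mul_le_mul hxY _ (by positivity) (le_of_lt hY0)
            exact pow_le_pow_left₀ (le_of_lt hLx0) hLxY 2
          linarith
      have h2 : (2 - Real.log x) / (x * (Real.log x) ^ 3) ≤
          (-(Real.log x / 2)) / (x * (Real.log x) ^ 3) := by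
        apply (div_le_div_iff_of_pos_right (by positivity : (0:ℝ) < x * (Real.log x) ^ 3)).2
        linarith
      have heq2 : (-(Real.log x / 2)) / (x * (Real.log x) ^ 3) =
          -(1 / (2 * x * (Real.log x) ^ 2)) := by
        field_simp
      rw [heq2] at h2
      linarith
  -- use concavity at the midpoint
  have hmemX : X ∈ Set.Icc X Y := Set.mem_Icc.2 ⟨le_refl _, le_of_lt hXY⟩
  have hmemY : Y ∈ Set.Icc X Y := Set.mem_Icc.2 ⟨le_of_lt hXY, le_refl _⟩
  have h2c := hconc.2 hmemX hmemY (by norm_num : (0:ℝ) ≤ 1/2)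
    (by norm_num : (0:ℝ) ≤ 1/2) (by norm_num : (1/2 : ℝ) + 1/2 = 1)
  simp only [smul_eq_mul] at h2c
  have hmid : (1/2 : ℝ) * X + (1/2 : ℝ) * Y = m := by
    rw [hXdef, hYdef, hmdef]; ring
  rw [hmid] at h2c
  simp only [hφdef] at h2c
  have hring : c/2 * X^2 + c/2 * Y^2 - c * m^2 = c * k^2 / 4 := by
    rw [hXdef, hYdef, hmdef]; ring
  have hLne : Real.log Y ≠ 0 := ne_of_gt hLY0
  have hj1ne : ((j:ℝ) + 1) ≠ 0 := by positivity
  have heqc : c * k^2 / 4 = k / (8 * ((j:ℝ)+1) * (Real.log Y)^2) := by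
    rw [hcdef, hYdef]
    field_simp
    ring
  linarith [h2c, hring, heqc]

lemma harmonic_log (a b : ℕ) (hab : a ≤ b) :
    Real.log (((b : ℝ) + 2) / ((a : ℝ) + 1)) ≤
      ∑ j ∈ Finset.Icc a b, (1 : ℝ) / ((j : ℝ) + 1) := by
  induction b, hab using Nat.le_induction with
  | base =>
      rw [Finset.Icc_self, Finset.sum_singleton]
      have hpos : (0:ℝ) < ((a:ℝ)+2)/((a:ℝ)+1) := by positivity
      have h := Real.log_le_sub_one_of_pos hpos
      have he : ((a:ℝ)+2)/((a:ℝ)+1) - 1 = 1/((a:ℝ)+1) := by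
        field_simp
        norm_num
      linarith
  | succ n hn ih =>
      rw [Finset.sum_Icc_succ_top (by omega : a ≤ n + 1)]
      push_cast
      have hpos : (0:ℝ) < ((n:ℝ)+3)/((n:ℝ)+2) := by positivity
      have h := Real.log_le_sub_one_of_pos hpos
      have he : ((n:ℝ)+3)/((n:ℝ)+2) - 1 = 1/((n:ℝ)+1+1) := by
        field_simp
        ring
      have hsplit : Real.log (((n:ℝ)+1+2)/((a:ℝ)+1)) =
          Real.log (((n:ℝ)+3)/((n:ℝ)+2)) + Real.log (((n:ℝ)+2)/((a:ℝ)+1)) := by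
        rw [← Real.log_mul (by positivity) (by positivity)]
        congr 1
        field_simp
        ring
      linarith [hsplit, h, he, ih]

theorem sum_Ej_prime_lower_bound (k : ℝ) (hk : Real.exp 4 ≤ k) (a b : ℕ)
    (ha : 1 ≤ a) (hab : a ≤ b) :
    (8 / k) * ∑ j ∈ Finset.Icc a b,
        (2 * f (((j : ℝ) + 1 / 2) * k) - f ((j : ℝ) * k) - f (((j : ℝ) + 1) * k)) >
      Real.log ((4 * b + 6) / (9 * a)) / (Real.log (((b : ℝ) + 1) * k)) ^ 2 := by
  have he4 : (5 : ℝ) ≤ Real.exp 4 := by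
    have := Real.add_one_le_exp (4 : ℝ); linarith
  have hk0 : (0 : ℝ) < k := by linarith
  have haR : (1:ℝ) ≤ (a:ℝ) := by exact_mod_cast ha
  have habR : (a:ℝ) ≤ (b:ℝ) := by exact_mod_cast hab
  set L : ℝ := Real.log (((b : ℝ) + 1) * k) with hLdef
  have hbk : k ≤ ((b:ℝ)+1)*k := by nlinarith
  have hL4 : (4:ℝ) ≤ L := by
    rw [hLdef, ← Real.log_exp 4]
    exact Real.log_le_log (Real.exp_pos 4) (le_trans hk hbk)
  have hL0 : (0:ℝ) < L := by linarith
  have hL2 : (0:ℝ) < L^2 := by positivity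
  -- step 1: per-term bounds
  have h3 : ∑ j ∈ Finset.Icc a b, (1:ℝ)/(((j:ℝ)+1)*L^2) ≤
      (8 / k) * ∑ j ∈ Finset.Icc a b,
        (2 * f (((j : ℝ) + 1 / 2) * k) - f ((j : ℝ) * k) - f (((j : ℝ) + 1) * k)) := by
    rw [Finset.mul_sum]
    apply Finset.sum_le_sum
    intro j hj
    obtain ⟨hja, hjb⟩ := Finset.mem_Icc.1 hj
    have hj1 : 1 ≤ j := le_trans ha hja
    have hjbR : (j:ℝ) ≤ (b:ℝ) := by exact_mod_cast hjb
    have hjR : (1:ℝ) ≤ (j:ℝ) := by exact_mod_cast hj1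
    have hkey := key_term k hk j hj1
    have hLj4 : (4:ℝ) ≤ Real.log (((j:ℝ)+1)*k) := by
      rw [← Real.log_exp 4]
      apply Real.log_le_log (Real.exp_pos 4)
      nlinarith
    have hLjL : Real.log (((j:ℝ)+1)*k) ≤ L := by
      rw [hLdef]
      apply Real.log_le_log (by positivity)
      nlinarith
    have hmono : k/(8*((j:ℝ)+1)*L^2) ≤ k/(8*((j:ℝ)+1)*(Real.log (((j:ℝ)+1)*k))^2) := by
      gcongr
    calc (1:ℝ)/(((j:ℝ)+1)*L^2) = (8/k) * (k/(8*((j:ℝ)+1)*L^2)) := by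
          field_simp
      _ ≤ (8/k) * (k/(8*((j:ℝ)+1)*(Real.log (((j:ℝ)+1)*k))^2)) := by
          apply mul_le_mul_of_nonneg_left hmono (by positivity)
      _ ≤ (8/k) * (2 * f (((j : ℝ) + 1 / 2) * k) - f ((j : ℝ) * k) - f (((j : ℝ) + 1) * k)) := by
          apply mul_le_mul_of_nonneg_left hkey (by positivity)
  -- step 2: harmonic comparison
  have h2 : Real.log (((b : ℝ) + 2) / ((a : ℝ) + 1)) / L^2 ≤
      ∑ j ∈ Finset.Icc a b, (1:ℝ)/(((j:ℝ)+1)*L^2) := by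
    have hsumeq : ∑ j ∈ Finset.Icc a b, (1:ℝ)/(((j:ℝ)+1)*L^2) =
        (∑ j ∈ Finset.Icc a b, (1:ℝ)/((j:ℝ)+1)) / L^2 := by
      rw [Finset.sum_div]
      exact Finset.sum_congr rfl (fun j _ => by rw [div_div])
    rw [hsumeq]
    exact (div_le_div_iff_of_pos_right hL2).2 (harmonic_log a b hab)
  -- step 3: strict log inequality
  have hloglt : Real.log ((4 * (b:ℝ) + 6) / (9 * (a:ℝ))) <
      Real.log (((b : ℝ) + 2) / ((a : ℝ) + 1)) := by
    apply Real.log_lt_log (by positivity)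
    rw [div_lt_div_iff₀ (by positivity) (by positivity)]
    nlinarith
  have h1 : Real.log ((4 * (b:ℝ) + 6) / (9 * (a:ℝ))) / L^2 <
      Real.log (((b : ℝ) + 2) / ((a : ℝ) + 1)) / L^2 := by
    gcongr
  push_cast
  linarith [h1, h2, h3]
end

section
/- For natural numbers 1 ≤ a ≤ b, the product ∏_{s=a}^{b} (2(s+1)+1)/(2(s+1)) is bounded below by √((4b+6)/(9a)). -/
lemma telescope_icc (a b : ℕ) (hab : a ≤ b) :
    ∏ s ∈ Finset.Icc a b, (((s : ℝ) + 2) / ((s : ℝ) + 1)) = ((b : ℝ) + 2) / ((a : ℝ) + 1) := by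
  induction b, hab using Nat.le_induction with
  | base => simp
  | succ n hn ih =>
      rw [Finset.prod_Icc_succ_top (Nat.le_succ_of_le hn), ih]
      have h1 : (a : ℝ) + 1 > 0 := by positivity
      have h2 : (n : ℝ) + 2 > 0 := by positivity
      push_cast
      field_simp
      ring

theorem wallis_product_lower_bound (a b : ℕ) (ha : 1 ≤ a) (hab : a ≤ b) :
    ∏ s ∈ Finset.Icc a b, ((2 * ((s : ℝ) + 1) + 1) / (2 * ((s : ℝ) + 1))) ≥
      Real.sqrt ((4 * b + 6) / (9 * a)) := by
  set P : ℝ := ∏ s ∈ Finset.Icc a b, ((2 * ((s : ℝ) + 1) + 1) / (2 * ((s : ℝ) + 1))) with hP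
  have hPnn : 0 ≤ P := Finset.prod_nonneg (fun s _ => by positivity)
  have hsq : ((b : ℝ) + 2) / ((a : ℝ) + 1) ≤ P ^ 2 := by
    rw [hP, ← Finset.prod_pow, ← telescope_icc a b hab]
    apply Finset.prod_le_prod
    · intro s _
      positivity
    · intro s _
      have h1 : (0:ℝ) < (s:ℝ) + 1 := by positivity
      rw [div_pow, div_le_div_iff₀ h1 (by positivity)]
      nlinarith [sq_nonneg ((s:ℝ))]
  have ha1 : (1:ℝ) ≤ (a:ℝ) := by exact_mod_cast ha
  have hab1 : (a:ℝ) ≤ (b:ℝ) := by exact_mod_cast hab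
  have hfrac : (4 * (b:ℝ) + 6) / (9 * a) ≤ ((b : ℝ) + 2) / ((a : ℝ) + 1) := by
    rw [div_le_div_iff₀ (by positivity) (by positivity)]
    nlinarith
  calc Real.sqrt ((4 * (b:ℝ) + 6) / (9 * a))
      ≤ Real.sqrt (P ^ 2) := Real.sqrt_le_sqrt (le_trans hfrac hsq)
    _ = P := by rw [Real.sqrt_sq hPnn]
end

section
/- Define ε(x) = √(8·log x/(17π·η))·exp(−√(log x / η)) with η = 6.455. Assume |θ(t) − t| < t·ε(t) for all t ≥ 149, where θ is the Chebyshev function. Then for all real k ≥ 298 and every integer j ≥ 1, writing x_j = jk and x̄_j = (j+1/2)k: ∫_{x_j}^{x̄_j} θ(τ)/(τ·log²τ) dτ − ∫_{x̄_j}^{x_{j+1}} θ(τ)/(τ·log²τ) dτ > −k·ε(x̄_j)/log²(x̄_j). -/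
/-- The Chebyshev function `θ(x) = ∑_{p ≤ x} log p`. -/
noncomputable def chebyshevTheta (x : ℝ) : ℝ :=
  ∑ p ∈ (Finset.range (⌊x⌋₊ + 1)).filter Nat.Prime, Real.log p

/-- Trudgian's error function `ε(x)`. -/
noncomputable def eps (x : ℝ) : ℝ :=
  Real.sqrt (8 * Real.log x / (17 * Real.pi * 6.455)) *
    Real.exp (-Real.sqrt (Real.log x / 6.455))

lemma theta_mono : Monotone chebyshevTheta := by
  intro x y hxy
  unfold chebyshevTheta
  apply Finset.sum_le_sum_of_subset_of_nonneg
  · exact Finset.filter_subset_filter _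
      (Finset.range_subset_range.2 (Nat.succ_le_succ (Nat.floor_mono hxy)))
  · intro p hp _
    have hp' : p.Prime := (Finset.mem_filter.1 hp).2
    exact Real.log_nonneg (by exact_mod_cast hp'.one_lt.le)

lemma eps_nonneg (x : ℝ) : 0 ≤ eps x :=
  mul_nonneg (Real.sqrt_nonneg _) (Real.exp_pos _).le

noncomputable def gfun (x : ℝ) : ℝ := eps x / Real.log x ^ 2
noncomputable def hfun (x : ℝ) : ℝ := (Real.log x ^ 2)⁻¹

lemma log_lb {x : ℝ} (hx : 298 ≤ x) : 5.545 ≤ Real.log x := by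
  have h2 : (0.6931471803 : ℝ) < Real.log 2 := Real.log_two_gt_d9
  have h256 : Real.log 256 ≤ Real.log x :=
    Real.log_le_log (by norm_num) (by linarith)
  have : Real.log 256 = 8 * Real.log 2 := by
    rw [show (256:ℝ) = 2 ^ 8 by norm_num, Real.log_pow]
    norm_num
  linarith

lemma hasDerivAt_hfun {x : ℝ} (hx : 1 < x) :
    HasDerivAt hfun (-(2 / (x * Real.log x ^ 3))) x := by
  have hx0 : x ≠ 0 := by positivity
  have hL : 0 < Real.log x := Real.log_pos hx
  have hlog : HasDerivAt Real.log x⁻¹ x := Real.hasDerivAt_log hx0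
  have h6 : HasDerivAt (fun y => Real.log y ^ 2) (2 * Real.log x ^ 1 * x⁻¹) x := by
    exact (hlog.pow 2).congr_deriv (by norm_num)
  have := h6.inv (by positivity)
  refine this.congr_deriv ?_
  field_simp

lemma hasDerivAt_gfun {x : ℝ} (hx : 1 < x) :
    HasDerivAt gfun
      (-(eps x * (3 + Real.sqrt (Real.log x / 6.455)) / (2 * x * Real.log x ^ 3))) x := by
  have hx0 : x ≠ 0 := by positivity
  have hL : 0 < Real.log x := Real.log_pos hx
  have hπ : 0 < Real.pi := Real.pi_pos
  set L := Real.log x with hLdef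
  have hu : 0 < 8 * L / (17 * Real.pi * 6.455) := by positivity
  have hv : 0 < L / 6.455 := by positivity
  set r := Real.sqrt (8 * L / (17 * Real.pi * 6.455)) with hrdef
  set s := Real.sqrt (L / 6.455) with hsdef
  have hr0 : 0 < r := Real.sqrt_pos.2 hu
  have hs0 : 0 < s := Real.sqrt_pos.2 hv
  have hr2 : r * r = 8 * L / (17 * Real.pi * 6.455) := Real.mul_self_sqrt hu.le
  have hs2 : s * s = L / 6.455 := Real.mul_self_sqrt hv.le
  have hlog : HasDerivAt Real.log x⁻¹ x := Real.hasDerivAt_log hx0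
  have h1 : HasDerivAt (fun y => 8 * Real.log y / (17 * Real.pi * 6.455))
      (8 * x⁻¹ / (17 * Real.pi * 6.455)) x := (hlog.const_mul 8).div_const _
  have h2 : HasDerivAt (fun y => Real.sqrt (8 * Real.log y / (17 * Real.pi * 6.455)))
      (8 * x⁻¹ / (17 * Real.pi * 6.455) / (2 * r)) x := h1.sqrt (ne_of_gt hu)
  have h3 : HasDerivAt (fun y => Real.log y / 6.455) (x⁻¹ / 6.455) x := hlog.div_const _
  have h4 : HasDerivAt (fun y => Real.exp (-Real.sqrt (Real.log y / 6.455)))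
      (Real.exp (-s) * -(x⁻¹ / 6.455 / (2 * s))) x := ((h3.sqrt (ne_of_gt hv)).neg).exp
  have hr2' : r * r * (17 * Real.pi * 6.455) = 8 * L := by
    rw [hr2]; field_simp
  have hs2' : s * s * 6.455 = L := by
    rw [hs2]; field_simp
  have hA : 8 * x⁻¹ / (17 * Real.pi * 6.455) / (2 * r) = r * x⁻¹ / (2 * L) := by
    rw [div_eq_div_iff (by positivity) (by positivity), div_mul_eq_mul_div,
      div_eq_iff (by positivity)]
    linear_combination (-2) * x⁻¹ * hr2'
  have hB : x⁻¹ / 6.455 / (2 * s) = s * x⁻¹ / (2 * L) := by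
    rw [div_eq_div_iff (by positivity) (by positivity), div_mul_eq_mul_div,
      div_eq_iff (by positivity)]
    linear_combination (-2) * x⁻¹ * hs2'
  rw [hA] at h2
  rw [hB] at h4
  have h5 : HasDerivAt eps
      (r * x⁻¹ / (2 * L) * Real.exp (-s) + r * (Real.exp (-s) * -(s * x⁻¹ / (2 * L)))) x :=
    h2.mul h4
  have h6 : HasDerivAt (fun y => Real.log y ^ 2) (2 * L ^ 1 * x⁻¹) x := by
    exact (hlog.pow 2).congr_deriv (by norm_num [hLdef])
  have h7 := h5.div h6 (by positivity)
  have heq : eps x = r * Real.exp (-s) := rfl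
  refine h7.congr_deriv ?_
  rw [heq, ← hLdef]
  field_simp
  ring

lemma aux_exp {s : ℝ} (hs : 0 ≤ s) : s * (3 + s) ≤ 3 * Real.exp s := by
  have h1 : 1 + s / 3 ≤ Real.exp (s / 3) := by
    linarith [Real.add_one_le_exp (s / 3)]
  have h2 : (1 + s / 3) ^ 3 ≤ Real.exp (s / 3) ^ 3 := by
    apply pow_le_pow_left₀ (by linarith) h1
  have h3 : Real.exp (s / 3) ^ 3 = Real.exp s := by
    rw [← Real.exp_nat_mul]; ring_nf
  nlinarith [h2, h3, sq_nonneg s, pow_nonneg hs 3]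

lemma eps_bound {x : ℝ} (hx : 1 < x) :
    eps x * (3 + Real.sqrt (Real.log x / 6.455)) ≤ 1.2 := by
  have hL : 0 < Real.log x := Real.log_pos hx
  have hπ : 0 < Real.pi := Real.pi_pos
  set s := Real.sqrt (Real.log x / 6.455) with hsdef
  have hs0 : 0 ≤ s := Real.sqrt_nonneg _
  have hsplit : Real.sqrt (8 * Real.log x / (17 * Real.pi * 6.455))
      = Real.sqrt (8 / (17 * Real.pi)) * s := by
    rw [hsdef, ← Real.sqrt_mul (by positivity)]
    congr 1
    field_simp
  have hB : Real.sqrt (8 / (17 * Real.pi)) ≤ 0.4 := by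
    rw [show (0.4:ℝ) = Real.sqrt (0.16) by
      rw [show (0.16:ℝ) = 0.4 ^ 2 by norm_num, Real.sqrt_sq (by norm_num)]]
    apply Real.sqrt_le_sqrt
    rw [div_le_iff₀ (by positivity)]
    nlinarith [Real.pi_gt_d6]
  have hexp : s * (3 + s) * Real.exp (-s) ≤ 3 := by
    have h := aux_exp hs0
    have hepos : 0 < Real.exp s := Real.exp_pos s
    rw [Real.exp_neg, ← div_eq_mul_inv, div_le_iff₀ hepos]
    linarith
  have hcalc : eps x * (3 + s)
      = Real.sqrt (8 / (17 * Real.pi)) * (s * (3 + s) * Real.exp (-s)) := by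
    unfold eps
    rw [hsplit]
    ring
  rw [hcalc]
  calc Real.sqrt (8 / (17 * Real.pi)) * (s * (3 + s) * Real.exp (-s))
      ≤ 0.4 * 3 := mul_le_mul hB hexp (by positivity) (by norm_num)
    _ = 1.2 := by norm_num

lemma f_integrable {a b : ℝ} (ha : 1 < a) (hab : a ≤ b) :
    IntervalIntegrable (fun τ => chebyshevTheta τ / (τ * Real.log τ ^ 2))
      MeasureTheory.volume a b := by
  have h1 : MonotoneOn chebyshevTheta (Set.uIcc a b) := theta_mono.monotoneOn _
  have h2 : IntervalIntegrable chebyshevTheta MeasureTheory.volume a b :=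
    h1.intervalIntegrable
  have huIcc : Set.uIcc a b = Set.Icc a b := Set.uIcc_of_le hab
  have hsub : Set.Icc a b ⊆ {(0:ℝ)}ᶜ := by
    intro x hx
    simp only [Set.mem_compl_iff, Set.mem_singleton_iff]
    have : 1 < x := lt_of_lt_of_le ha hx.1
    linarith
  have hcont : ContinuousOn (fun τ : ℝ => (τ * Real.log τ ^ 2)⁻¹) (Set.uIcc a b) := by
    rw [huIcc]
    apply ContinuousOn.inv₀
    · exact continuousOn_id.mul ((Real.continuousOn_log.mono hsub).pow 2)
    · intro x hx
      have hx1 : 1 < x := lt_of_lt_of_le ha hx.1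
      exact ne_of_gt (mul_pos (by linarith) (pow_pos (Real.log_pos hx1) 2))
  have h3 := h2.mul_continuousOn hcont
  simpa [div_eq_mul_inv] using h3

set_option maxHeartbeats 2000000 in
theorem integral_difference_lower_bound
    (hθ : ∀ t : ℝ, 149 ≤ t → |chebyshevTheta t - t| < t * eps t)
    (k : ℝ) (hk : 298 ≤ k) (j : ℕ) (hj : 1 ≤ j) :
    (∫ τ in ((j : ℝ) * k)..(((j : ℝ) + 1 / 2) * k),
        chebyshevTheta τ / (τ * (Real.log τ) ^ 2)) -
      (∫ τ in (((j : ℝ) + 1 / 2) * k)..(((j : ℝ) + 1) * k),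
        chebyshevTheta τ / (τ * (Real.log τ) ^ 2)) >
    -(k * eps (((j : ℝ) + 1 / 2) * k) / (Real.log (((j : ℝ) + 1 / 2) * k)) ^ 2) := by
  have hj1 : (1:ℝ) ≤ (j:ℝ) := by exact_mod_cast hj
  have hk0 : (0:ℝ) < k := by linarith
  set a : ℝ := (j:ℝ) * k with ha_def
  set m : ℝ := ((j:ℝ) + 1/2) * k with hm_def
  set b : ℝ := ((j:ℝ) + 1) * k with hb_def
  set f : ℝ → ℝ := fun τ => chebyshevTheta τ / (τ * Real.log τ ^ 2) with hf_def
  have ha : 298 ≤ a := by rw [ha_def]; nlinarith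
  have ham : a + k/2 = m := by rw [ha_def, hm_def]; ring
  have hmb' : m + k/2 = b := by rw [hm_def, hb_def]; ring
  have ham' : a ≤ m := by linarith
  have hmb : m ≤ b := by linarith
  have hb2a : b ≤ 2 * a := by rw [ha_def, hb_def]; nlinarith
  have hm298 : 298 ≤ m := by linarith
  have hb298 : 298 ≤ b := by linarith
  have hb0 : 0 < b := by linarith
  have hLb : 0 < Real.log b := Real.log_pos (by linarith)
  have hLa : 0 < Real.log a := Real.log_pos (by linarith)
  -- numeric comparison : b * (log b)^3 ≤ 3 * (a * (log a)^3)
  have hQP : b * Real.log b ^ 3 ≤ 3 * (a * Real.log a ^ 3) := by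
    have hLa5 : 5.545 ≤ Real.log a := log_lb ha
    have hl2 : Real.log 2 < 0.6931472 := by
      have := Real.log_two_lt_d9
      linarith
    have hLab : Real.log b ≤ Real.log a + 0.6931472 := by
      have h1 : Real.log b ≤ Real.log (2 * a) := Real.log_le_log (by linarith) hb2a
      have h2 : Real.log (2 * a) = Real.log 2 + Real.log a :=
        Real.log_mul (by norm_num) (by positivity)
      linarith
    have h2 : Real.log b ^ 3 ≤ (Real.log a + 0.6931472) ^ 3 :=
      pow_le_pow_left₀ hLb.le hLab 3
    have h3 : 2 * (Real.log a + 0.6931472) ^ 3 ≤ 3 * Real.log a ^ 3 := by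
      nlinarith [hLa5, sq_nonneg (Real.log a - 5.545)]
    nlinarith [pow_pos hLb 3, pow_pos hLa 3]
  -- pointwise bounds on f
  have flb : ∀ t : ℝ, 298 ≤ t → hfun t - gfun t ≤ f t := by
    intro t ht
    have h := abs_lt.1 (hθ t (by linarith))
    have ht0 : (0:ℝ) < t := by linarith
    have hLt : 0 < Real.log t := Real.log_pos (by linarith)
    have hd : 0 < t * Real.log t ^ 2 := by positivity
    have hrepr : hfun t - gfun t = (t - t * eps t) / (t * Real.log t ^ 2) := by
      unfold hfun gfun
      field_simp
    rw [hrepr]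
    show (t - t * eps t) / (t * Real.log t ^ 2) ≤ chebyshevTheta t / (t * Real.log t ^ 2)
    gcongr
    linarith [h.1]
  have fub : ∀ t : ℝ, 298 ≤ t → f t ≤ hfun t + gfun t := by
    intro t ht
    have h := abs_lt.1 (hθ t (by linarith))
    have ht0 : (0:ℝ) < t := by linarith
    have hLt : 0 < Real.log t := Real.log_pos (by linarith)
    have hd : 0 < t * Real.log t ^ 2 := by positivity
    have hrepr : hfun t + gfun t = (t + t * eps t) / (t * Real.log t ^ 2) := by
      unfold hfun gfun
      field_simp
    rw [hrepr]
    show chebyshevTheta t / (t * Real.log t ^ 2) ≤ (t + t * eps t) / (t * Real.log t ^ 2)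
    gcongr
    linarith [h.2]
  -- monotonicity facts
  have hlin : ∀ (c x : ℝ), HasDerivAt (fun y : ℝ => c * y) c x := fun c x => by
    simpa using (hasDerivAt_id x).const_mul c
  have hF1 : AntitoneOn (fun x => hfun x + 2 / (b * Real.log b ^ 3) * x) (Set.Icc a b) := by
    apply antitoneOn_of_deriv_nonpos (convex_Icc a b)
    · intro x hx
      have hx1 : (1:ℝ) < x := by have := hx.1; linarith
      exact (((hasDerivAt_hfun hx1).add
        (hlin (2 / (b * Real.log b ^ 3)) x)).continuousAt).continuousWithinAt
    · intro x hx
      rw [interior_Icc] at hx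
      have hx1 : (1:ℝ) < x := by have := hx.1; linarith
      exact (((hasDerivAt_hfun hx1).add
        (hlin (2 / (b * Real.log b ^ 3)) x)).differentiableAt).differentiableWithinAt
    · intro x hx
      rw [interior_Icc] at hx
      have hx1 : (1:ℝ) < x := by have := hx.1; linarith
      rw [HasDerivAt.deriv (f := fun x => hfun x + 2 / (b * Real.log b ^ 3) * x)
        (((hasDerivAt_hfun hx1).add
        (hlin (2 / (b * Real.log b ^ 3)) x)))]
      have hLx : 0 < Real.log x := Real.log_pos hx1
      have hLxb : Real.log x ≤ Real.log b := Real.log_le_log (by linarith) hx.2.le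
      have h1 : x * Real.log x ^ 3 ≤ b * Real.log b ^ 3 :=
        mul_le_mul hx.2.le (pow_le_pow_left₀ hLx.le hLxb 3) (by positivity) (by linarith)
      have h2 : 2 / (b * Real.log b ^ 3) ≤ 2 / (x * Real.log x ^ 3) :=
        div_le_div_of_nonneg_left (by norm_num) (by positivity) h1
      linarith
  have hF2 : MonotoneOn (fun x => gfun x + 0.6 / (a * Real.log a ^ 3) * x) (Set.Icc a m) := by
    apply monotoneOn_of_deriv_nonneg (convex_Icc a m)
    · intro x hx
      have hx1 : (1:ℝ) < x := by have := hx.1; linarith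
      exact (((hasDerivAt_gfun hx1).add
        (hlin (0.6 / (a * Real.log a ^ 3)) x)).continuousAt).continuousWithinAt
    · intro x hx
      rw [interior_Icc] at hx
      have hx1 : (1:ℝ) < x := by have := hx.1; linarith
      exact (((hasDerivAt_gfun hx1).add
        (hlin (0.6 / (a * Real.log a ^ 3)) x)).differentiableAt).differentiableWithinAt
    · intro x hx
      rw [interior_Icc] at hx
      have hx1 : (1:ℝ) < x := by have := hx.1; linarith
      rw [HasDerivAt.deriv (f := fun x => gfun x + 0.6 / (a * Real.log a ^ 3) * x)
        (((hasDerivAt_gfun hx1).add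
        (hlin (0.6 / (a * Real.log a ^ 3)) x)))]
      have hLx : 0 < Real.log x := Real.log_pos hx1
      have hLax : Real.log a ≤ Real.log x := Real.log_le_log (by linarith) hx.1.le
      have hs0 : (0:ℝ) ≤ Real.sqrt (Real.log x / 6.455) := Real.sqrt_nonneg _
      have heb := eps_bound hx1
      have hen := eps_nonneg x
      have h1 : a * Real.log a ^ 3 ≤ x * Real.log x ^ 3 :=
        mul_le_mul hx.1.le (pow_le_pow_left₀ hLa.le hLax 3) (by positivity) (by linarith)
      have h2 : eps x * (3 + Real.sqrt (Real.log x / 6.455)) / (2 * x * Real.log x ^ 3)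
          ≤ 1.2 / (2 * x * Real.log x ^ 3) := by
        gcongr
      have h3 : (1.2:ℝ) / (2 * x * Real.log x ^ 3) = 0.6 / (x * Real.log x ^ 3) := by
        ring
      have h4 : (0.6:ℝ) / (x * Real.log x ^ 3) ≤ 0.6 / (a * Real.log a ^ 3) :=
        div_le_div_of_nonneg_left (by norm_num) (by positivity) h1
      linarith
  have hF3 : AntitoneOn gfun (Set.Icc m b) := by
    apply antitoneOn_of_deriv_nonpos (convex_Icc m b)
    · intro x hx
      have hx1 : (1:ℝ) < x := by have := hx.1; linarith
      exact ((hasDerivAt_gfun hx1).continuousAt).continuousWithinAt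
    · intro x hx
      rw [interior_Icc] at hx
      have hx1 : (1:ℝ) < x := by have := hx.1; linarith
      exact ((hasDerivAt_gfun hx1).differentiableAt).differentiableWithinAt
    · intro x hx
      rw [interior_Icc] at hx
      have hx1 : (1:ℝ) < x := by have := hx.1; linarith
      rw [(hasDerivAt_gfun hx1).deriv]
      have hLx : 0 < Real.log x := Real.log_pos hx1
      have hs0 : (0:ℝ) ≤ Real.sqrt (Real.log x / 6.455) := Real.sqrt_nonneg _
      have hen := eps_nonneg x
      apply neg_nonpos_of_nonneg
      apply div_nonneg (mul_nonneg hen (by linarith)) (by positivity)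
  -- the key pointwise estimate
  have hpt : ∀ τ ∈ Set.Icc m b,
      -(2 * gfun m) + k / (10 * (b * Real.log b ^ 3)) ≤ f (τ - k/2) - f τ := by
    intro τ hτ
    obtain ⟨hτm, hτb⟩ := hτ
    have hσa : a ≤ τ - k/2 := by linarith
    have hσm : τ - k/2 ≤ m := by linarith
    have hσ298 : 298 ≤ τ - k/2 := by linarith
    have hτ298 : 298 ≤ τ := by linarith
    have h1 := flb (τ - k/2) hσ298
    have h2 := fub τ hτ298
    -- h-difference
    have h3 : hfun τ + 2 / (b * Real.log b ^ 3) * τ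
        ≤ hfun (τ - k/2) + 2 / (b * Real.log b ^ 3) * (τ - k/2) :=
      hF1 ⟨hσa, by linarith⟩ ⟨by linarith, hτb⟩ (by linarith)
    -- g bounds
    have h4 : gfun (τ - k/2) + 0.6 / (a * Real.log a ^ 3) * (τ - k/2)
        ≤ gfun m + 0.6 / (a * Real.log a ^ 3) * m :=
      hF2 ⟨hσa, hσm⟩ ⟨ham', le_refl m⟩ hσm
    have h5 : gfun τ ≤ gfun m := hF3 ⟨le_refl m, hmb⟩ ⟨hτm, hτb⟩ hτm
    have hc2 : (0:ℝ) ≤ 0.6 / (a * Real.log a ^ 3) := by positivity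
    have h6 : 0.6 / (a * Real.log a ^ 3) * (m - (τ - k/2))
        ≤ 0.6 / (a * Real.log a ^ 3) * (k/2) := by
      apply mul_le_mul_of_nonneg_left (by linarith) hc2
    -- numeric step
    have hQ : 0 < b * Real.log b ^ 3 := by positivity
    have hP : 0 < a * Real.log a ^ 3 := by positivity
    have h7 : 0.6 / (a * Real.log a ^ 3) * (k/2) + k / (10 * (b * Real.log b ^ 3))
        ≤ 2 / (b * Real.log b ^ 3) * (k/2) := by
      rw [div_mul_eq_mul_div, div_mul_eq_mul_div, div_add_div _ _ (ne_of_gt hP) (by positivity),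
        div_le_div_iff₀ (by positivity) hQ]
      nlinarith [mul_le_mul_of_nonneg_left hQP (mul_pos hk0 hQ).le, hP, hQ, hk0,
        mul_pos hk0 (mul_pos hP hQ)]
    linarith
  -- integrability
  have hint1 : IntervalIntegrable f MeasureTheory.volume a m := f_integrable (by linarith) ham'
  have hint2 : IntervalIntegrable f MeasureTheory.volume m b := f_integrable (by linarith) hmb
  have hint3 : IntervalIntegrable (fun τ => f (τ - k/2)) MeasureTheory.volume m b := by
    have h := hint1.comp_sub_right (k/2)
    rwa [ham, hmb'] at h
  -- shift identity
  have hshift : (∫ τ in m..b, f (τ - k/2)) = ∫ τ in a..m, f τ := by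
    rw [intervalIntegral.integral_comp_sub_right f (k/2),
      show m - k/2 = a by linarith, show b - k/2 = m by linarith]
  -- integral comparison
  have hmono := intervalIntegral.integral_mono_on hmb
    (intervalIntegrable_const (c := -(2 * gfun m) + k / (10 * (b * Real.log b ^ 3))))
    (hint3.sub hint2) hpt
  rw [intervalIntegral.integral_sub hint3 hint2, hshift,
    intervalIntegral.integral_const, smul_eq_mul] at hmono
  have hμ : 0 < k / (10 * (b * Real.log b ^ 3)) := by positivity
  have hexpand : (b - m) * (-(2 * gfun m) + k / (10 * (b * Real.log b ^ 3)))
      = -(k * gfun m) + (k/2) * (k / (10 * (b * Real.log b ^ 3))) := by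
    rw [show b - m = k/2 by linarith]
    ring
  have hgoal : k * eps m / Real.log m ^ 2 = k * gfun m := by
    unfold gfun
    ring
  rw [gt_iff_lt, hgoal]
  have hpos : 0 < (k/2) * (k / (10 * (b * Real.log b ^ 3))) := by positivity
  linarith
end

section
/- Let x₋ ≤ x₊ be reals with x₋ ≥ 149, and define Δ̃(x₋,x₊) = (1 − x₋/x₊)·(1+ε(x₋))/log²x₋ − x₋/x₊ + 2ε(x₋), where ε(x) = √(8 log x/(17π·6.455))·e^{−√(log x/6.455)}. If x₊/x₋ ≤ 1 + C·x₋^{−d} for constants C, d > 0, then there is an explicitly computable constant C₁ > 0 (depending only on C and d) such that 1 + Δ̃(x₋, x₊) < C₁·ε(x₋) for all sufficiently large x₋. -/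
lemma sqrt_le_exp_aux (t s u : ℝ) (hs0 : 0 ≤ s) (hs26 : 26 ≤ s) (hu0 : 0 ≤ u)
    (hu2 : 6.455 * u^2 = t) (hs2 : s^2 = t) : s ≤ Real.exp u := by
  have hexp : Real.exp u = Real.exp (u/2) * Real.exp (u/2) := by
    rw [← Real.exp_add]; ring_nf
  have h5 : (u/2 + 1)^2 ≤ Real.exp u := by
    have h6 : u/2 + 1 ≤ Real.exp (u/2) := Real.add_one_le_exp (u/2)
    nlinarith [Real.exp_pos (u/2)]
  nlinarith [h5, hu2, hs2, mul_le_mul_of_nonneg_left hs26 hs0, hu0, hs0]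

set_option maxHeartbeats 1000000 in
theorem one_add_delta_lt_eps (C d : ℝ) (hC : 0 < C) (hd : 0 < d) :
    ∃ C₁ : ℝ, 0 < C₁ ∧ ∃ X : ℝ, 149 ≤ X ∧
      ∀ xm xp : ℝ, X ≤ xm → xm ≤ xp → xp / xm ≤ 1 + C * xm ^ (-d) →
        1 + ((1 - xm / xp) * (1 + eps xm) / (Real.log xm) ^ 2 - xm / xp + 2 * eps xm) <
          C₁ * eps xm := by
  set T : ℝ := max ((2/d + |Real.log (2*C)|)^2) 700 with hTdef
  refine ⟨4, by norm_num, max 149 (Real.exp T), le_max_left _ _, ?_⟩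
  intro xm xp hxm hle hratio
  have hxm149 : (149:ℝ) ≤ xm := le_trans (le_max_left _ _) hxm
  have hxm0 : (0:ℝ) < xm := by linarith
  have hxp0 : (0:ℝ) < xp := lt_of_lt_of_le hxm0 hle
  have ht : T ≤ Real.log xm := by
    rw [Real.le_log_iff_exp_le hxm0]
    exact le_trans (le_max_right _ _) hxm
  have htq : (2/d + |Real.log (2*C)|)^2 ≤ Real.log xm := le_trans (le_max_left _ _) ht
  have ht700' : (700:ℝ) ≤ Real.log xm := le_trans (le_max_right _ _) ht
  clear ht hTdef
  clear_value T
  set t := Real.log xm with htdef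
  clear_value t
  have ht700 : (700:ℝ) ≤ t := ht700'
  have ht0 : (0:ℝ) ≤ t := by linarith
  have hpi3 : (3:ℝ) < Real.pi := Real.pi_gt_three
  have hpi4 : Real.pi ≤ 4 := Real.pi_le_four
  set K : ℝ := 17 * Real.pi * 6.455 with hKdef
  have hK0 : (0:ℝ) < K := by positivity
  have hK8 : (8:ℝ) ≤ K := by nlinarith
  have hK440 : K ≤ 440 := by nlinarith
  clear_value K
  set s := Real.sqrt t with hsdef
  have hs0 : (0:ℝ) ≤ s := Real.sqrt_nonneg t
  have hs2 : s^2 = t := Real.sq_sqrt ht0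
  have hs26 : (26:ℝ) ≤ s := by nlinarith
  have hsbig' : 2/d + |Real.log (2*C)| ≤ s := by
    have h2 : 0 ≤ 2/d + |Real.log (2*C)| := by positivity
    have h3 := Real.sqrt_le_sqrt htq
    rwa [Real.sqrt_sq h2, ← hsdef] at h3
  clear_value s
  set u := Real.sqrt (t / 6.455) with hudef
  have hu0 : (0:ℝ) ≤ u := Real.sqrt_nonneg _
  have hu2' : u^2 = t / 6.455 := Real.sq_sqrt (by positivity)
  have hu2 : 6.455 * u^2 = t := by rw [hu2']; field_simp
  have hus : u ≤ s := by
    rw [hsdef]; exact Real.sqrt_le_sqrt (by norm_num; linarith)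
  clear_value u
  -- eps is positive
  have hE0 : 0 < eps xm := by
    unfold eps
    rw [← htdef, ← hKdef, ← hudef]
    have : 0 < 8 * t / K := by positivity
    exact mul_pos (Real.sqrt_pos.2 this) (Real.exp_pos _)
  -- eps ≥ exp(-s)
  have hsqrt1 : (1:ℝ) ≤ Real.sqrt (8 * t / K) := by
    rw [show (1:ℝ) = Real.sqrt 1 by rw [Real.sqrt_one]]
    apply Real.sqrt_le_sqrt
    rw [le_div_iff₀ hK0]
    nlinarith
  have hElow : Real.exp (-s) ≤ eps xm := by
    unfold eps
    rw [← htdef, ← hKdef, ← hudef]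
    calc Real.exp (-s) ≤ Real.exp (-u) := Real.exp_le_exp.2 (by linarith)
      _ = 1 * Real.exp (-u) := (one_mul _).symm
      _ ≤ Real.sqrt (8 * t / K) * Real.exp (-u) :=
          mul_le_mul_of_nonneg_right hsqrt1 (Real.exp_pos _).le
  -- 2 * C * xm^(-d) ≤ exp(-s)
  have hs_big : 2/d + |Real.log (2*C)| ≤ s := hsbig'
  have hds : (2:ℝ) ≤ d * s := by
    have hdd : d * (2/d) = 2 := mul_div_cancel₀ 2 hd.ne'
    have h1 := mul_le_mul_of_nonneg_left hs_big hd.le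
    have h4 : 0 ≤ d * |Real.log (2*C)| := mul_nonneg hd.le (abs_nonneg _)
    linarith [hdd, h1, h4]
  have hkey : Real.log (2*C) + t * (-d) ≤ -s := by
    have h1 : 0 ≤ (d * s - 2) * s := mul_nonneg (by linarith) hs0
    have h2 : Real.log (2*C) ≤ |Real.log (2*C)| := le_abs_self _
    have h3 : |Real.log (2*C)| ≤ s := by
      have : 0 ≤ 2/d := by positivity
      linarith
    rw [← hs2]
    linarith [h1, h2, h3]
  have hA2 : 2 * (C * xm ^ (-d)) ≤ Real.exp (-s) := by
    have hrpow : xm ^ (-d) = Real.exp (t * (-d)) := by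
      rw [Real.rpow_def_of_pos hxm0, ← htdef]
    have h2C : (0:ℝ) < 2 * C := by linarith
    calc 2 * (C * xm ^ (-d)) = (2*C) * Real.exp (t * (-d)) := by rw [hrpow]; ring
      _ = Real.exp (Real.log (2*C) + t * (-d)) := by
          rw [Real.exp_add, Real.exp_log h2C]
      _ ≤ Real.exp (-s) := Real.exp_le_exp.2 hkey
  -- eps ≤ 1
  have hexpu : s ≤ Real.exp u := sqrt_le_exp_aux t s u hs0 hs26 hu0 hu2 hs2
  have hE1 : eps xm ≤ 1 := by
    unfold eps
    rw [← htdef, ← hKdef, ← hudef]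
    have h1 : Real.sqrt (8 * t / K) ≤ s := by
      rw [hsdef]
      apply Real.sqrt_le_sqrt
      rw [div_le_iff₀ hK0]
      nlinarith
    calc Real.sqrt (8 * t / K) * Real.exp (-u) ≤ s * Real.exp (-u) :=
          mul_le_mul_of_nonneg_right h1 (Real.exp_pos _).le
      _ ≤ Real.exp u * Real.exp (-u) :=
          mul_le_mul_of_nonneg_right hexpu (Real.exp_pos _).le
      _ = 1 := by rw [← Real.exp_add]; simp
  -- bound on 1 - xm/xp
  set A := C * xm ^ (-d) with hAdef
  have hA0 : (0:ℝ) ≤ A := by positivity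
  have hAE' : 2 * A ≤ Real.exp (-s) := hA2
  clear_value A
  have h7 : xp ≤ (1 + A) * xm := by
    rw [div_le_iff₀ hxm0] at hratio
    linarith
  have hr1 : xm / xp ≤ 1 := (div_le_one hxp0).2 hle
  have hv0 : 0 ≤ 1 - xm / xp := by linarith
  have hvA : 1 - xm / xp ≤ A := by
    rw [sub_le_iff_le_add, ← sub_le_iff_le_add', le_div_iff₀ hxp0]
    have := mul_le_mul_of_nonneg_left hle hA0
    nlinarith
  -- log² ≥ 2
  have hL2 : (2:ℝ) ≤ t ^ 2 := by nlinarith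
  have hL2pos : (0:ℝ) < t ^ 2 := by nlinarith
  -- combine: 2*A ≤ eps xm
  have hAE : 2 * A ≤ eps xm := le_trans hAE' hElow
  have hdiv : (1 - xm / xp) * (1 + eps xm) / t ^ 2 ≤ A := by
    rw [div_le_iff₀ hL2pos]
    nlinarith [mul_le_mul hvA hE1 hE0.le hA0, mul_le_mul_of_nonneg_left hL2 hA0]
  have hxv : xm / xp = 1 - (1 - xm / xp) := by ring
  linarith
end
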